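/- Let A be a noetherian local K-algebra, T = A[x_0,...,x_n], and let μ ≤ d be positive integers. Let I_d ⊆ T_d and I_{d+1} ⊆ T_{d+1} be A-submodules with T_1·I_d ⊆ I_{d+1}, such that T_d/I_d and T_{d+1}/I_{d+1} are free A-modules of rank μ. Then T_1·I_d = I_{d+1}. -/

import Mathlib

set_option linter.unusedSectionVars false
set_option linter.unusedVariables false
set_option maxHeartbeats 1000000
set_option synthInstance.maxHeartbeats 400000

open MvPolynomial Module Submodule

noncomputable section

namespace MacAux

variable {k : Type*} [Field k] {σ : Type*} [DecidableEq σ]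

lemma degree_add (f g : σ →₀ ℕ) : (f + g).degree = f.degree + g.degree := by
  simp [Finsupp.degree_eq_weight_one, map_add]

lemma degree_single (i : σ) (a : ℕ) : (Finsupp.single i a).degree = a := by
  rcases eq_or_ne a 0 with h | h
  · simp [h]
  · simp [Finsupp.degree_apply, Finsupp.support_single_ne_zero i h]

lemma mem_homog_iff {p : MvPolynomial σ k} {e : ℕ} :
    p ∈ homogeneousSubmodule σ k e ↔ ∀ m : σ →₀ ℕ, coeff m p ≠ 0 → m.degree = e := by
  rw [homogeneousSubmodule_eq_finsupp_supported, AddMonoidAlgebra.mem_supported]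
  constructor
  · intro h m hm
    exact h (Finsupp.mem_support_iff.mpr hm)
  · intro h m hm
    exact h m (Finsupp.mem_support_iff.mp hm)

/-- Contraction by the monomial with exponent `u`. -/
def ctr (u : σ →₀ ℕ) : MvPolynomial σ k →ₗ[k] MvPolynomial σ k where
  toFun p := AddMonoidAlgebra.comapDomain (u + ·) (add_right_injective u) p
  map_add' p q := AddMonoidAlgebra.comapDomain_add _ _ p q
  map_smul' c p := by
    ext m
    exact MvPolynomial.coeff_smul (u + m) c p

lemma coeff_ctr (u m : σ →₀ ℕ) (p : MvPolynomial σ k) :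
    coeff m (ctr u p) = coeff (u + m) p := rfl

lemma ctr_ctr (u v : σ →₀ ℕ) (p : MvPolynomial σ k) :
    ctr u (ctr v p) = ctr (u + v) p := by
  ext m
  rw [coeff_ctr, coeff_ctr, coeff_ctr, ← add_assoc, add_comm v u]

lemma ctr_mem_homog {p : MvPolynomial σ k} {e a : ℕ} (u : σ →₀ ℕ) (hu : u.degree = a)
    (hp : p ∈ homogeneousSubmodule σ k e) :
    ctr u p ∈ homogeneousSubmodule σ k (e - a) := by
  rw [mem_homog_iff] at hp ⊢
  intro m hm
  rw [coeff_ctr] at hm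
  have := hp _ hm
  rw [degree_add, hu] at this
  omega

/-- Polynomials whose monomials all have exponent of `i` at most `a`. -/
def degLE (i : σ) (a : ℕ) : Submodule k (MvPolynomial σ k) where
  carrier := {p | ∀ m : σ →₀ ℕ, coeff m p ≠ 0 → m i ≤ a}
  add_mem' := by
    intro p q hp hq m hm
    by_cases h : coeff m p ≠ 0
    · exact hp m h
    · push_neg at h
      exact hq m (by simpa [MvPolynomial.coeff_add, h] using hm)
  zero_mem' := by intro m hm; simp at hm
  smul_mem' := by
    intro c p hp m hm
    rw [MvPolynomial.coeff_smul] at hm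
    exact hp m (by intro h; rw [h, smul_zero] at hm; exact hm rfl)

/-- Polynomials supported on variables in `J`. -/
def suppIn (J : Finset σ) : Submodule k (MvPolynomial σ k) where
  carrier := {p | ∀ m : σ →₀ ℕ, coeff m p ≠ 0 → ∀ i : σ, i ∉ J → m i = 0}
  add_mem' := by
    intro p q hp hq m hm
    by_cases h : coeff m p ≠ 0
    · exact hp m h
    · push_neg at h
      exact hq m (by simpa [MvPolynomial.coeff_add, h] using hm)
  zero_mem' := by intro m hm; simp at hm
  smul_mem' := by
    intro c p hp m hm
    rw [MvPolynomial.coeff_smul] at hm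
    exact hp m (by intro h; rw [h, smul_zero] at hm; exact hm rfl)

lemma homog_le_degLE (i : σ) (e : ℕ) :
    homogeneousSubmodule σ k e ≤ degLE i e := by
  intro p hp m hm
  exact le_trans (Finsupp.le_degree i m) (le_of_eq (mem_homog_iff.mp hp m hm))

instance homog_fd [Finite σ] (e : ℕ) :
    FiniteDimensional k (homogeneousSubmodule σ k e) := by
  have h : homogeneousSubmodule σ k e ≤ restrictTotalDegree σ k e := by
    intro p hp
    rw [mem_restrictTotalDegree]
    exact MvPolynomial.IsHomogeneous.totalDegree_le hp
  exact Submodule.finiteDimensional_of_le h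

/-- ambient rank-nullity -/
lemma finrank_map_add_inf_ker {M N : Type*} [AddCommGroup M] [Module k M]
    [AddCommGroup N] [Module k N] (f : M →ₗ[k] N) (W : Submodule k M)
    [FiniteDimensional k W] :
    finrank k (W.map f) + finrank k ↥(W ⊓ LinearMap.ker f) = finrank k W := by
  have h := LinearMap.finrank_range_add_finrank_ker (f.domRestrict W)
  rw [LinearMap.range_domRestrict] at h
  have : LinearMap.ker (f.domRestrict W) = Submodule.comap W.subtype (W ⊓ LinearMap.ker f) := by
    ext x
    simp [LinearMap.mem_ker, LinearMap.domRestrict_apply]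
  rw [this] at h
  rwa [(Submodule.comapSubtypeEquivOfLe (inf_le_left : W ⊓ LinearMap.ker f ≤ W)).finrank_eq] at h

lemma ctr_single_eq_zero_iff {i : σ} {a : ℕ} {p : MvPolynomial σ k}
    (hp : p ∈ degLE i (a + 1)) :
    ctr (Finsupp.single i (a + 1)) p = 0 ↔ p ∈ degLE i a := by
  constructor
  · intro h m hm
    by_contra hgt
    push_neg at hgt
    have hle : m i = a + 1 := le_antisymm (hp m hm) hgt
    have hsle : Finsupp.single i (a + 1) ≤ m := by
      rw [Finsupp.single_le_iff, hle]
    have : coeff (m - Finsupp.single i (a + 1)) (ctr (Finsupp.single i (a + 1)) p) = coeff m p := by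
      rw [coeff_ctr, add_tsub_cancel_of_le hsle]
    rw [h] at this
    simp at this
    exact hm this.symm
  · intro h
    ext m
    rw [coeff_ctr]
    by_contra hc
    simp only [MvPolynomial.coeff_zero] at hc
    have := h _ hc
    simp [Finsupp.add_apply, Finsupp.single_apply] at this
    omega

/-- The graded pieces of the filtration by `i`-degree. -/
def gpiece (i : σ) (a : ℕ) (W : Submodule k (MvPolynomial σ k)) :
    Submodule k (MvPolynomial σ k) :=
  (W ⊓ degLE i a).map (ctr (Finsupp.single i a))

lemma degLE_mono (i : σ) {a b : ℕ} (h : a ≤ b) :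
    (degLE i a : Submodule k (MvPolynomial σ k)) ≤ degLE i b :=
  fun p hp m hm => le_trans (hp m hm) h

lemma finrank_eq_sum_gpiece (i : σ) (V : Submodule k (MvPolynomial σ k))
    [FiniteDimensional k V] :
    ∀ b : ℕ, V ≤ degLE i b →
      finrank k V = ∑ a ∈ Finset.range (b + 1), finrank k (gpiece i a V) := by
  intro b
  induction b generalizing V with
  | zero =>
    intro hV
    have h1 : V ⊓ degLE i 0 = V := inf_eq_left.mpr hV
    have h0 : Finsupp.single i 0 = (0 : σ →₀ ℕ) := Finsupp.single_zero i
    have hid : (ctr (0 : σ →₀ ℕ) : MvPolynomial σ k →ₗ[k] MvPolynomial σ k) = LinearMap.id :=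
      LinearMap.ext fun p => MvPolynomial.ext _ _ (fun m => by rw [coeff_ctr, zero_add]; rfl)
    have h2 : gpiece i 0 V = V := by
      rw [gpiece, h1, h0, hid, Submodule.map_id]
    rw [Finset.sum_range_one, h2]
  | succ b ih =>
    intro hV
    have hrn := finrank_map_add_inf_ker (ctr (Finsupp.single i (b+1))) V
    have hker : V ⊓ LinearMap.ker (ctr (Finsupp.single i (b+1))) = V ⊓ degLE i b := by
      ext p
      simp only [Submodule.mem_inf, LinearMap.mem_ker]
      constructor
      · rintro ⟨h1, h2⟩
        exact ⟨h1, (ctr_single_eq_zero_iff (hV h1)).mp h2⟩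
      · rintro ⟨h1, h2⟩
        exact ⟨h1, (ctr_single_eq_zero_iff (hV h1)).mpr h2⟩
    rw [hker] at hrn
    have hmap : V.map (ctr (Finsupp.single i (b+1))) = gpiece i (b+1) V := by
      rw [gpiece, inf_eq_left.mpr hV]
    rw [hmap] at hrn
    have hfd : FiniteDimensional k ↥(V ⊓ degLE i b) := Submodule.finiteDimensional_of_le inf_le_left
    have ih2 := ih (V ⊓ degLE i b) inf_le_right
    have hpieces : ∀ a ∈ Finset.range (b+1), gpiece i a (V ⊓ degLE i b) = gpiece i a V := by
      intro a ha
      rw [Finset.mem_range] at ha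
      rw [gpiece, gpiece, inf_assoc, inf_eq_right.mpr (degLE_mono i (by omega : a ≤ b))]
    have ih3 : finrank k ↥(V ⊓ degLE i b) = ∑ a ∈ Finset.range (b+1), finrank k (gpiece i a V) := by
      rw [ih2]; exact Finset.sum_congr rfl (fun a ha => by rw [hpieces a ha])
    rw [Finset.sum_range_succ, ← ih3]
    omega

lemma comb_aux (e : ℕ) (w : ℕ → ℕ) :
    ∀ t a, a + t = e →
      max (∑ b ∈ Finset.Ico (a+1) (e+1), w b)
        (min (∑ b ∈ Finset.Ico a (e+1), w b) (e - a))
        ≤ ∑ b ∈ Finset.Ico a e, max (w (b+1)) (min (w b) (e - b)) := by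
  intro t
  induction t with
  | zero =>
    intro a ha
    have : a = e := by omega
    subst this
    simp
  | succ t ih =>
    intro a ha
    have ih' := ih (a+1) (by omega)
    have hS : ∑ b ∈ Finset.Ico a (e+1), w b
        = w a + ∑ b ∈ Finset.Ico (a+1) (e+1), w b :=
      Finset.sum_eq_sum_Ico_succ_bot (by omega) w
    have hS1 : ∑ b ∈ Finset.Ico (a+1) (e+1), w b
        = w (a+1) + ∑ b ∈ Finset.Ico (a+1+1) (e+1), w b :=
      Finset.sum_eq_sum_Ico_succ_bot (by omega) w
    have hT : ∑ b ∈ Finset.Ico a e, max (w (b+1)) (min (w b) (e - b))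
        = max (w (a+1)) (min (w a) (e - a))
          + ∑ b ∈ Finset.Ico (a+1) e, max (w (b+1)) (min (w b) (e - b)) :=
      Finset.sum_eq_sum_Ico_succ_bot (by omega) _
    rw [hT]
    omega

lemma comb (e : ℕ) (w : ℕ → ℕ) :
    min (∑ b ∈ Finset.range (e+1), w b) e
      ≤ ∑ b ∈ Finset.range e, max (w (b+1)) (min (w b) (e - b)) := by
  have h := comb_aux e w e 0 (by omega)
  simp only [Finset.range_eq_Ico]
  rw [Nat.sub_zero] at h
  exact le_trans (le_max_right _ _) h

/-- Span of the images of `W` under the contractions by variables in `J`. -/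
def cSpan (J : Finset σ) (W : Submodule k (MvPolynomial σ k)) :
    Submodule k (MvPolynomial σ k) :=
  J.sup fun i => W.map (ctr (Finsupp.single i 1))

theorem lemmaL [Finite σ] (J : Finset σ) :
    ∀ (e : ℕ) (W : Submodule k (MvPolynomial σ k)),
      W ≤ homogeneousSubmodule σ k e → W ≤ suppIn J →
      min (finrank k W) e ≤ finrank k (cSpan J W) := by
  induction J using Finset.strongInduction with
  | _ J IH =>
    intro e W hWh hWs
    rcases Nat.eq_zero_or_pos e with he | he
    · subst he; simp
    obtain ⟨e', rfl⟩ : ∃ e', e = e' + 1 := ⟨e - 1, by omega⟩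
    rcases J.eq_empty_or_nonempty with rfl | ⟨i₀, hi₀⟩
    · have hbot : W = ⊥ := by
        rw [eq_bot_iff]
        intro p hp
        have : p = 0 := by
          ext m
          by_contra hc
          simp only [MvPolynomial.coeff_zero] at hc
          have hm0 : m = 0 := Finsupp.ext fun i => hWs hp m hc i (Finset.notMem_empty i)
          have := mem_homog_iff.mp (hWh hp) m hc
          rw [hm0, map_zero] at this
          omega
        simp [this, Submodule.mem_bot]
      subst hbot
      simp
    haveI hfdW : FiniteDimensional k W := Submodule.finiteDimensional_of_le hWh
    set J' := J.erase i₀ with hJ'def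
    set C := cSpan J W with hCdef
    have hCle : C ≤ homogeneousSubmodule σ k e' := by
      rw [hCdef, cSpan]
      apply Finset.sup_le
      intro i hi
      rintro x ⟨p, hp, rfl⟩
      have h := ctr_mem_homog (Finsupp.single i 1) (degree_single i 1) (hWh hp)
      simpa using h
    haveI hfdC : FiniteDimensional k C := Submodule.finiteDimensional_of_le hCle
    have hWdeg : W ≤ degLE i₀ (e'+1) := le_trans hWh (homog_le_degLE i₀ (e'+1))
    have hCdeg : C ≤ degLE i₀ e' := le_trans hCle (homog_le_degLE i₀ e')
    have hsumW := finrank_eq_sum_gpiece i₀ W (e'+1) hWdeg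
    have hsumC := finrank_eq_sum_gpiece i₀ C e' hCdeg
    -- properties of the graded pieces of W
    have hWbar_homog : ∀ a : ℕ, gpiece i₀ a W ≤ homogeneousSubmodule σ k (e'+1-a) := by
      intro a
      rintro x ⟨p, ⟨hpW, _⟩, rfl⟩
      exact ctr_mem_homog _ (degree_single i₀ a) (hWh hpW)
    have hWbar_supp : ∀ a : ℕ, gpiece i₀ a W ≤ suppIn J' := by
      intro a
      rintro x ⟨p, ⟨hpW, hpdeg⟩, rfl⟩
      intro m hm i hi
      rw [coeff_ctr] at hm
      rcases eq_or_ne i i₀ with rfl | hne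
      · have h1 := hpdeg _ hm
        rw [Finsupp.add_apply, Finsupp.single_eq_same] at h1
        omega
      · have h2 := hWs hpW _ hm i (fun hiJ => hi (Finset.mem_erase.mpr ⟨hne, hiJ⟩))
        rw [Finsupp.add_apply, Finsupp.single_eq_of_ne' (Ne.symm hne)] at h2
        omega
    have hCbar_fd : ∀ a : ℕ, FiniteDimensional k (gpiece i₀ a C) := by
      intro a
      have : gpiece i₀ a C ≤ homogeneousSubmodule σ k (e'-a) := by
        rintro x ⟨p, ⟨hpC, _⟩, rfl⟩
        exact ctr_mem_homog _ (degree_single i₀ a) (hCle hpC)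
      exact Submodule.finiteDimensional_of_le this
    -- key inequality for each level
    have key : ∀ a : ℕ, a < e'+1 →
        max (finrank k (gpiece i₀ (a+1) W))
          (min (finrank k (gpiece i₀ a W)) (e'+1-a)) ≤ finrank k (gpiece i₀ a C) := by
      intro a ha
      haveI := hCbar_fd a
      have h1 : gpiece i₀ (a+1) W ≤ gpiece i₀ a C := by
        rintro x ⟨p, ⟨hpW, hpdeg⟩, rfl⟩
        refine ⟨ctr (Finsupp.single i₀ 1) p, ⟨?_, ?_⟩, ?_⟩
        · exact (Finset.le_sup hi₀ : _ ≤ C) ⟨p, hpW, rfl⟩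
        · intro m hm
          rw [coeff_ctr] at hm
          have := hpdeg _ hm
          rw [Finsupp.add_apply, Finsupp.single_eq_same] at this
          omega
        · rw [ctr_ctr, ← Finsupp.single_add]
      have h2 : cSpan J' (gpiece i₀ a W) ≤ gpiece i₀ a C := by
        apply Finset.sup_le
        intro i hiJ'
        obtain ⟨hne, hiJ⟩ := Finset.mem_erase.mp hiJ'
        rintro x ⟨q, ⟨p, ⟨hpW, hpdeg⟩, rfl⟩, rfl⟩
        refine ⟨ctr (Finsupp.single i 1) p, ⟨?_, ?_⟩, ?_⟩
        · exact (Finset.le_sup hiJ : _ ≤ C) ⟨p, hpW, rfl⟩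
        · intro m hm
          rw [coeff_ctr] at hm
          have := hpdeg _ hm
          rw [Finsupp.add_apply, Finsupp.single_eq_of_ne' hne] at this
          omega
        · rw [ctr_ctr, ctr_ctr, add_comm]
      have hIH := IH J' (Finset.erase_ssubset hi₀) (e'+1-a) (gpiece i₀ a W)
        (hWbar_homog a) (hWbar_supp a)
      refine max_le ?_ ?_
      · exact le_trans (Submodule.finrank_mono h1) le_rfl
      · exact le_trans hIH (Submodule.finrank_mono h2)
    have hcomb := comb (e'+1) (fun a => finrank k ↥(gpiece i₀ a W))
    calc min (finrank k W) (e'+1)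
        = min (∑ b ∈ Finset.range (e'+1+1), finrank k ↥(gpiece i₀ b W)) (e'+1) := by rw [hsumW]
      _ ≤ ∑ b ∈ Finset.range (e'+1),
            max (finrank k ↥(gpiece i₀ (b+1) W)) (min (finrank k ↥(gpiece i₀ b W)) (e'+1-b)) :=
          hcomb
      _ ≤ ∑ b ∈ Finset.range (e'+1), finrank k ↥(gpiece i₀ b C) :=
          Finset.sum_le_sum (fun a ha => key a (Finset.mem_range.mp ha))
      _ = finrank k C := hsumC.symm


/-! ### The monomial pairing and annihilators -/

/-- The standard coefficientwise pairing of polynomials. -/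
def pairing (f g : MvPolynomial σ k) : k :=
  ∑ m ∈ f.support, coeff m f * coeff m g

lemma pairing_eq_sum {f : MvPolynomial σ k} (g : MvPolynomial σ k)
    {s : Finset (σ →₀ ℕ)} (hs : f.support ⊆ s) :
    pairing f g = ∑ m ∈ s, coeff m f * coeff m g := by
  refine Finset.sum_subset hs ?_
  intro m _ hm
  rw [MvPolynomial.notMem_support_iff] at hm
  rw [hm, zero_mul]

lemma pairing_monomial (u : σ →₀ ℕ) (c : k) (g : MvPolynomial σ k) :
    pairing (monomial u c) g = c * coeff u g := by
  classical
  rcases eq_or_ne c 0 with rfl | hc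
  · simp [pairing]
  · rw [pairing_eq_sum g (by rw [MvPolynomial.support_monomial, if_neg hc])]
    rw [Finset.sum_singleton, MvPolynomial.coeff_monomial, if_pos rfl]

lemma pairing_monomial_right (f : MvPolynomial σ k) (u : σ →₀ ℕ) (c : k) :
    pairing f (monomial u c) = coeff u f * c := by
  unfold pairing
  rw [Finset.sum_eq_single u]
  · rw [MvPolynomial.coeff_monomial, if_pos rfl]
  · intro m _ hm
    rw [MvPolynomial.coeff_monomial, if_neg (Ne.symm hm), mul_zero]
  · intro hu
    rw [MvPolynomial.notMem_support_iff] at hu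
    rw [hu, zero_mul]

lemma pairing_add_left (f f' g : MvPolynomial σ k) :
    pairing (f + f') g = pairing f g + pairing f' g := by
  have h1 : (f + f').support ⊆ f.support ∪ f'.support := MvPolynomial.support_add
  rw [pairing_eq_sum (f := f + f') g h1,
    pairing_eq_sum (f := f) g (Finset.subset_union_left),
    pairing_eq_sum (f := f') g (Finset.subset_union_right), ← Finset.sum_add_distrib]
  apply Finset.sum_congr rfl
  intro m _
  rw [MvPolynomial.coeff_add, add_mul]

lemma pairing_smul_left (c : k) (f g : MvPolynomial σ k) :
    pairing (c • f) g = c * pairing f g := by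
  rw [pairing_eq_sum (f := c • f) g (MvPolynomial.support_smul), pairing, Finset.mul_sum]
  apply Finset.sum_congr rfl
  intro m _
  rw [MvPolynomial.coeff_smul, smul_eq_mul, mul_assoc]

lemma pairing_add_right (f g g' : MvPolynomial σ k) :
    pairing f (g + g') = pairing f g + pairing f g' := by
  unfold pairing
  rw [← Finset.sum_add_distrib]
  apply Finset.sum_congr rfl
  intro m _
  rw [MvPolynomial.coeff_add, mul_add]

lemma pairing_smul_right (c : k) (f g : MvPolynomial σ k) :
    pairing f (c • g) = c * pairing f g := by
  unfold pairing
  rw [Finset.mul_sum]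
  apply Finset.sum_congr rfl
  intro m _
  rw [MvPolynomial.coeff_smul, smul_eq_mul]
  ring

lemma pairing_X_mul (i : σ) (f g : MvPolynomial σ k) :
    pairing (X i * f) g = pairing f (ctr (Finsupp.single i 1) g) := by
  induction f using MvPolynomial.induction_on' with
  | monomial u c =>
    rw [show (X i : MvPolynomial σ k) * monomial u c = monomial (Finsupp.single i 1 + u) c by
      rw [X, monomial_mul, one_mul]]
    rw [pairing_monomial, pairing_monomial, coeff_ctr]
  | add p q hp hq =>
    rw [mul_add, pairing_add_left, pairing_add_left, hp, hq]

/-- Annihilator of `V` inside the space of degree-`e` homogeneous polynomials. -/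
def annih (V : Submodule k (MvPolynomial σ k)) (e : ℕ) : Submodule k (MvPolynomial σ k) where
  carrier := {g | g ∈ homogeneousSubmodule σ k e ∧ ∀ f ∈ V, pairing f g = 0}
  add_mem' := by
    rintro g g' ⟨hg1, hg2⟩ ⟨hg1', hg2'⟩
    exact ⟨Submodule.add_mem _ hg1 hg1', fun f hf => by
      rw [pairing_add_right, hg2 f hf, hg2' f hf, add_zero]⟩
  zero_mem' := by
    refine ⟨Submodule.zero_mem _, fun f hf => ?_⟩
    unfold pairing
    simp
  smul_mem' := by
    rintro c g ⟨hg1, hg2⟩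
    exact ⟨Submodule.smul_mem _ c hg1, fun f hf => by
      rw [pairing_smul_right, hg2 f hf, mul_zero]⟩

/-- The pairing map into the dual of `V`. -/
def pairDual (V : Submodule k (MvPolynomial σ k)) :
    MvPolynomial σ k →ₗ[k] Module.Dual k V where
  toFun g :=
    { toFun := fun v => pairing v.1 g
      map_add' := fun v w => pairing_add_left v.1 w.1 g
      map_smul' := fun c v => pairing_smul_left c v.1 g }
  map_add' g g' := by
    ext v
    exact pairing_add_right v.1 g g'
  map_smul' c g := by
    ext v
    exact pairing_smul_right c v.1 g

lemma homog_inf_ker_pairDual (V : Submodule k (MvPolynomial σ k)) (e : ℕ) :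
    homogeneousSubmodule σ k e ⊓ LinearMap.ker (pairDual V) = annih V e := by
  ext g
  simp only [Submodule.mem_inf, LinearMap.mem_ker]
  constructor
  · rintro ⟨h1, h2⟩
    refine ⟨h1, fun f hf => ?_⟩
    have := congrArg (fun l => l ⟨f, hf⟩) h2
    simpa [pairDual] using this
  · rintro ⟨h1, h2⟩
    refine ⟨h1, ?_⟩
    ext v
    simpa [pairDual] using h2 v.1 v.2

/-- Easy direction of the annihilator dimension count. -/
lemma finrank_homog_le_annih [Finite σ] (V : Submodule k (MvPolynomial σ k))
    [FiniteDimensional k V] (e : ℕ) :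
    finrank k (homogeneousSubmodule σ k e) ≤ finrank k V + finrank k (annih V e) := by
  have h := finrank_map_add_inf_ker (pairDual V) (homogeneousSubmodule σ k e)
  rw [homog_inf_ker_pairDual] at h
  have h2 : finrank k ((homogeneousSubmodule σ k e).map (pairDual V)) ≤ finrank k V := by
    refine le_trans (Submodule.finrank_le _) ?_
    rw [Subspace.dual_finrank_eq]
  omega


lemma pairing_nondeg {e : ℕ} {g : MvPolynomial σ k} (hg : g ∈ homogeneousSubmodule σ k e)
    (h : ∀ f ∈ homogeneousSubmodule σ k e, pairing f g = 0) : g = 0 := by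
  ext m
  by_contra hc
  simp only [MvPolynomial.coeff_zero] at hc
  have hdeg : m.degree = e := mem_homog_iff.mp hg m hc
  have hmem : (monomial m (1:k)) ∈ homogeneousSubmodule σ k e :=
    isHomogeneous_monomial _ hdeg
  have := h _ hmem
  rw [pairing_monomial, one_mul] at this
  exact hc this

/-- Riesz-type map on the homogeneous component. -/
def riesz (e : ℕ) : ↥(homogeneousSubmodule σ k e) →ₗ[k]
    Module.Dual k ↥(homogeneousSubmodule σ k e) where
  toFun g :=
    { toFun := fun f => pairing f.1 g.1
      map_add' := fun v w => pairing_add_left v.1 w.1 g.1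
      map_smul' := fun c v => pairing_smul_left c v.1 g.1 }
  map_add' g g' := by ext v; exact pairing_add_right v.1 g.1 g'.1
  map_smul' c g := by ext v; exact pairing_smul_right c v.1 g.1

lemma riesz_surjective [Finite σ] (e : ℕ) : Function.Surjective (riesz (k := k) (σ := σ) e) := by
  have hinj : Function.Injective (riesz (k := k) (σ := σ) e) := by
    rw [← LinearMap.ker_eq_bot, eq_bot_iff]
    intro g hg
    rw [LinearMap.mem_ker] at hg
    have : ∀ f ∈ homogeneousSubmodule σ k e, pairing f g.1 = 0 := by
      intro f hf
      have := congrArg (fun l => l ⟨f, hf⟩) hg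
      simpa [riesz] using this
    have := pairing_nondeg g.2 this
    simp [Submodule.mem_bot]
    exact Subtype.ext this
  exact (LinearMap.injective_iff_surjective_of_finrank_eq_finrank
    (Subspace.dual_finrank_eq).symm).mp hinj

/-- Hard direction of the annihilator dimension count. -/
lemma finrank_annih_le [Finite σ] (V : Submodule k (MvPolynomial σ k)) (e : ℕ)
    (hVE : V ≤ homogeneousSubmodule σ k e) :
    finrank k V + finrank k (annih V e) ≤ finrank k (homogeneousSubmodule σ k e) := by
  haveI : FiniteDimensional k V := Submodule.finiteDimensional_of_le hVE
  have h := finrank_map_add_inf_ker (pairDual V) (homogeneousSubmodule σ k e)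
  rw [homog_inf_ker_pairDual] at h
  have hsurj : (homogeneousSubmodule σ k e).map (pairDual V) = ⊤ := by
    rw [Submodule.eq_top_iff']
    intro lam
    -- extend lam to the dual of the homogeneous component
    obtain ⟨Lam, hLam⟩ := LinearMap.dualMap_surjective_of_injective
      (Submodule.inclusion_injective hVE) lam
    obtain ⟨g, hgr⟩ := riesz_surjective (k := k) (σ := σ) e Lam
    refine ⟨g.1, g.2, ?_⟩
    ext v
    have h1 : pairDual V g.1 v = pairing v.1 g.1 := rfl
    have h2 : lam v = Lam (Submodule.inclusion hVE v) := by
      rw [← hLam]; rfl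
    rw [h1, h2, ← hgr]
    rfl
  rw [hsurj, finrank_top, Subspace.dual_finrank_eq] at h
  omega


/-- Macaulay-type growth bound over a field: if `V` is a subspace of the degree-`d`
homogeneous component of codimension at most `mu ≤ d`, and `W₁` contains `X i * V`
for all `i`, then `W₁` has codimension at most `mu` in degree `d+1`. -/
theorem lemmaM [Fintype σ] (d mu : ℕ) (hmd : mu ≤ d)
    (V W₁ : Submodule k (MvPolynomial σ k))
    (hV : V ≤ homogeneousSubmodule σ k d)
    (hW : W₁ ≤ homogeneousSubmodule σ k (d+1))
    (hcodim : finrank k (homogeneousSubmodule σ k d) ≤ finrank k V + mu)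
    (hmul : ∀ i : σ, ∀ f ∈ V, (X i : MvPolynomial σ k) * f ∈ W₁) :
    finrank k (homogeneousSubmodule σ k (d+1)) ≤ finrank k W₁ + mu := by
  haveI : FiniteDimensional k W₁ := Submodule.finiteDimensional_of_le hW
  set U' := annih W₁ (d+1) with hU'def
  set U := annih V d with hUdef
  have hU'homog : U' ≤ homogeneousSubmodule σ k (d+1) := fun g hg => hg.1
  have hUhomog : U ≤ homogeneousSubmodule σ k d := fun g hg => hg.1
  haveI : FiniteDimensional k U' := Submodule.finiteDimensional_of_le hU'homog
  haveI : FiniteDimensional k U := Submodule.finiteDimensional_of_le hUhomog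
  have hctr : cSpan Finset.univ U' ≤ U := by
    apply Finset.sup_le
    intro i _
    rintro x ⟨g, hg, rfl⟩
    refine ⟨?_, ?_⟩
    · have := ctr_mem_homog (Finsupp.single i 1) (degree_single i 1) hg.1
      simpa using this
    · intro f hf
      rw [← pairing_X_mul]
      exact hg.2 _ (hmul i f hf)
  have hUle : finrank k U ≤ mu := by
    have := finrank_annih_le V d hV
    rw [← hUdef] at this
    omega
  have hL := lemmaL Finset.univ (d+1) U' hU'homog
    (fun g hg m hm i hi => absurd (Finset.mem_univ i) hi)
  have hcs : finrank k (cSpan Finset.univ U') ≤ finrank k U := Submodule.finrank_mono hctr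
  have hU' : finrank k U' ≤ mu := by omega
  have := finrank_homog_le_annih W₁ (d+1)
  rw [← hU'def] at this
  omega


/-! ### Reduction from a local ring to its residue field -/

section Aside

variable {A : Type*} [CommRing A] [IsLocalRing A] {σ : Type*} [Fintype σ] [DecidableEq σ]

local notation "res" => IsLocalRing.residue A

lemma res_surjective : Function.Surjective (IsLocalRing.residue A) :=
  Ideal.Quotient.mk_surjective

/-- general homogeneity criterion (any coefficient ring) -/
lemma mem_homog_iff' {R : Type*} [CommSemiring R] {p : MvPolynomial σ R} {e : ℕ} :
    p ∈ homogeneousSubmodule σ R e ↔ ∀ m : σ →₀ ℕ, coeff m p ≠ 0 → m.degree = e := by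
  rw [homogeneousSubmodule_eq_finsupp_supported, AddMonoidAlgebra.mem_supported]
  constructor
  · intro h m hm
    exact h (Finsupp.mem_support_iff.mpr hm)
  · intro h m hm
    exact h m (Finsupp.mem_support_iff.mp hm)

lemma psi_homog {p : MvPolynomial σ A} {e : ℕ} (hp : p ∈ homogeneousSubmodule σ A e) :
    MvPolynomial.map (IsLocalRing.residue A) p ∈ homogeneousSubmodule σ (IsLocalRing.ResidueField A) e := by
  rw [mem_homog_iff'] at hp ⊢
  intro m hm
  rw [MvPolynomial.coeff_map] at hm
  exact hp m (fun h => hm (by rw [h, map_zero]))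

lemma psi_smul (a : A) (p : MvPolynomial σ A) :
    MvPolynomial.map (IsLocalRing.residue A) (a • p)
      = (IsLocalRing.residue A a) • MvPolynomial.map (IsLocalRing.residue A) p := by
  ext m
  rw [MvPolynomial.coeff_map, MvPolynomial.coeff_smul, MvPolynomial.coeff_smul,
    MvPolynomial.coeff_map, smul_eq_mul, smul_eq_mul, map_mul]

/-- The image of an `A`-submodule of polynomials in the residue-field polynomial ring. -/
def resSub (N : Submodule A (MvPolynomial σ A)) : Submodule (IsLocalRing.ResidueField A) (MvPolynomial σ (IsLocalRing.ResidueField A)) where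
  carrier := (MvPolynomial.map (IsLocalRing.residue A)) '' N
  add_mem' := by
    rintro x y ⟨p, hp, rfl⟩ ⟨q, hq, rfl⟩
    exact ⟨p + q, N.add_mem hp hq, by rw [map_add]⟩
  zero_mem' := ⟨0, N.zero_mem, by rw [map_zero]⟩
  smul_mem' := by
    rintro c x ⟨p, hp, rfl⟩
    obtain ⟨a, rfl⟩ := res_surjective c
    exact ⟨a • p, N.smul_mem a hp, psi_smul a p⟩

lemma mem_resSub {N : Submodule A (MvPolynomial σ A)} {x : MvPolynomial σ (IsLocalRing.ResidueField A)} :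
    x ∈ resSub N ↔ ∃ p ∈ N, MvPolynomial.map (IsLocalRing.residue A) p = x := Iff.rfl

lemma resSub_le_homog {N : Submodule A (MvPolynomial σ A)} {e : ℕ}
    (hN : N ≤ homogeneousSubmodule σ A e) :
    resSub N ≤ homogeneousSubmodule σ (IsLocalRing.ResidueField A) e := by
  rintro x ⟨p, hp, rfl⟩
  exact psi_homog (hN hp)

/-- A degreewise lift of a polynomial over the residue field. -/
def liftPoly (s : MvPolynomial σ (IsLocalRing.ResidueField A)) : MvPolynomial σ A :=
  ∑ m ∈ s.support, monomial m (Function.surjInv res_surjective (coeff m s))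

lemma psi_liftPoly (s : MvPolynomial σ (IsLocalRing.ResidueField A)) :
    MvPolynomial.map (IsLocalRing.residue A) (liftPoly s) = s := by
  rw [liftPoly, map_sum]
  have : ∀ m ∈ s.support,
      MvPolynomial.map (IsLocalRing.residue A)
        (monomial m (Function.surjInv res_surjective (coeff m s)))
      = monomial m (coeff m s) := by
    intro m _
    rw [MvPolynomial.map_monomial]
    exact congrArg _ (Function.surjInv_eq res_surjective _)
  rw [Finset.sum_congr rfl this, MvPolynomial.support_sum_monomial_coeff]

lemma liftPoly_homog {s : MvPolynomial σ (IsLocalRing.ResidueField A)} {e : ℕ}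
    (hs : s ∈ homogeneousSubmodule σ (IsLocalRing.ResidueField A) e) : liftPoly s ∈ homogeneousSubmodule σ A e := by
  apply Submodule.sum_mem
  intro m hm
  rw [MvPolynomial.mem_support_iff] at hm
  exact isHomogeneous_monomial _ (mem_homog_iff'.mp hs m hm)

/-- Nakayama-style covering lemma. -/
lemma nakayama_cover {M : Type*} [AddCommGroup M] [Module A M]
    {P N' : Submodule A M} (hPfg : P.FG)
    (h : P ≤ N' ⊔ (IsLocalRing.maximalIdeal A) • P) : P ≤ N' := by
  have h1 : P.map N'.mkQ ≤ (IsLocalRing.maximalIdeal A) • (P.map N'.mkQ) := by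
    rintro y ⟨x, hx, rfl⟩
    have hh := h hx
    rw [Submodule.mem_sup] at hh
    obtain ⟨a, ha, b, hb, rfl⟩ := hh
    have hza : N'.mkQ a = 0 := by
      rw [Submodule.mkQ_apply, Submodule.Quotient.mk_eq_zero]
      exact ha
    rw [map_add, hza, zero_add]
    rw [← Submodule.map_smul''] 
    exact ⟨b, hb, rfl⟩
  have h2 := Submodule.eq_bot_of_le_smul_of_le_jacobson_bot (IsLocalRing.maximalIdeal A)
    (P.map N'.mkQ) (hPfg.map _) h1 (IsLocalRing.maximalIdeal_le_jacobson ⊥)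
  intro x hx
  have hmem : N'.mkQ x ∈ P.map N'.mkQ := ⟨x, hx, rfl⟩
  rw [h2, Submodule.mem_bot, Submodule.mkQ_apply, Submodule.Quotient.mk_eq_zero] at hmem
  exact hmem

/-- If the quotient by `N₂` is free of rank `μ` and `N₁ ⊔ span(g) = ⊤` for a `μ`-tuple `g`,
then `N₂ ≤ N₁`. -/
lemma le_of_quotient_basis {M : Type*} [AddCommGroup M] [Module A M]
    {N₁ N₂ : Submodule A M} (h12 : N₁ ≤ N₂) {μ : ℕ}
    (b : Basis (Fin μ) A (M ⧸ N₂)) (g : Fin μ → M)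
    (hspan : ∀ x : M, x ∈ N₁ ⊔ Submodule.span A (Set.range g)) :
    N₂ ≤ N₁ := by
  classical
  let q : (M ⧸ N₁) →ₗ[A] (M ⧸ N₂) := Submodule.mapQ N₁ N₂ LinearMap.id (by simpa using h12)
  have hq : ∀ x : M, q (Submodule.Quotient.mk x) = Submodule.Quotient.mk x := by
    intro x
    rw [Submodule.mapQ_apply, LinearMap.id_apply]
  let v : Fin μ → M ⧸ N₁ := fun j => Submodule.Quotient.mk (g j)
  let e1 := Finsupp.linearCombination A v
  have he1 : Function.Surjective e1 := by
    rw [← LinearMap.range_eq_top, Finsupp.range_linearCombination, Submodule.eq_top_iff']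
    intro y
    obtain ⟨x, rfl⟩ := Submodule.Quotient.mk_surjective N₁ y
    have hh := hspan x
    rw [Submodule.mem_sup] at hh
    obtain ⟨a, ha, z, hz, rfl⟩ := hh
    rw [mem_span_range_iff_exists_fun] at hz
    obtain ⟨c, hc⟩ := hz
    have hmk : (Submodule.Quotient.mk (a + z) : M ⧸ N₁) = ∑ j, c j • v j := by
      rw [← hc]
      have hza : (Submodule.Quotient.mk a : M ⧸ N₁) = 0 :=
        (Submodule.Quotient.mk_eq_zero _).mpr ha
      rw [Submodule.Quotient.mk_add, hza, zero_add]
      rw [show (Submodule.Quotient.mk (∑ i, c i • g i) : M ⧸ N₁) = N₁.mkQ (∑ i, c i • g i) from rfl,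
        map_sum]
      exact Finset.sum_congr rfl (fun j _ => by rw [map_smul]; rfl)
    rw [hmk]
    exact Submodule.sum_mem _ (fun j _ =>
      Submodule.smul_mem _ _ (Submodule.subset_span ⟨j, rfl⟩))
  let φc : (Fin μ →₀ A) →ₗ[A] (Fin μ →₀ A) := (b.repr.toLinearMap) ∘ₗ (q ∘ₗ e1)
  have hqsurj : Function.Surjective q := by
    intro y
    obtain ⟨x, rfl⟩ := Submodule.Quotient.mk_surjective N₂ y
    exact ⟨Submodule.Quotient.mk x, hq x⟩
  have hφc : Function.Surjective φc := by
    simp only [φc, LinearMap.coe_comp, LinearEquiv.coe_coe]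
    exact b.repr.surjective.comp (hqsurj.comp he1)
  haveI : Module.Finite A (Fin μ →₀ A) :=
    Module.Finite.equiv (Finsupp.linearEquivFunOnFinite A A (Fin μ)).symm
  have hinj : Function.Injective φc := OrzechProperty.injective_of_surjective_endomorphism φc hφc
  intro x hx
  obtain ⟨c, hc⟩ := he1 (Submodule.Quotient.mk x)
  have h0 : φc c = 0 := by
    have : q (e1 c) = 0 := by
      rw [hc, hq, Submodule.Quotient.mk_eq_zero]
      exact hx
    simp only [φc, LinearMap.comp_apply, this, map_zero]
  have hc0 : c = 0 := hinj (by rw [h0, map_zero])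
  rw [← Submodule.Quotient.mk_eq_zero, ← hc, hc0, map_zero]

end Aside

end MacAux

open MvPolynomial

/-- `T_d`: the `A`-submodule of homogeneous polynomials of degree `d`
in `T = A[x_0, …, x_n]`. -/
def homogComp (n : ℕ) (A : Type*) [CommRing A] (d : ℕ) :
    Submodule A (MvPolynomial (Fin (n + 1)) A) :=
  homogeneousSubmodule (Fin (n + 1)) A d

/-- The quotient `T_d / (N ∩ T_d)` for an `A`-submodule `N` of `T = A[x_0, …, x_n]`.
When `N ≤ T_d` this is the quotient of `T_d` by `N`. -/
def quotComp {n : ℕ} {A : Type*} [CommRing A]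
    (N : Submodule A (MvPolynomial (Fin (n + 1)) A)) (d : ℕ) :=
  homogComp n A d ⧸ N.comap (homogComp n A d).subtype

instance {n : ℕ} {A : Type*} [CommRing A]
    (N : Submodule A (MvPolynomial (Fin (n + 1)) A)) (d : ℕ) :
    AddCommGroup (quotComp N d) := by unfold quotComp; infer_instance

instance {n : ℕ} {A : Type*} [CommRing A]
    (N : Submodule A (MvPolynomial (Fin (n + 1)) A)) (d : ℕ) :
    Module A (quotComp N d) := by unfold quotComp; infer_instance

/-- `T_1 · N`: the `A`-submodule of `T` spanned by the products `ℓ · f` with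
`ℓ ∈ T_1` a linear form and `f ∈ N`. -/
def mulT1 {n : ℕ} {A : Type*} [CommRing A]
    (N : Submodule A (MvPolynomial (Fin (n + 1)) A)) :
    Submodule A (MvPolynomial (Fin (n + 1)) A) :=
  Submodule.span A {p | ∃ ℓ ∈ homogComp n A 1, ∃ f ∈ N, p = ℓ * f}

/-- Proposition `prop:2.5`.
Let `A` be a noetherian local `K`-algebra (`K` algebraically closed of characteristic 0),
`T = A[x_0, …, x_n]`, and `μ ≤ d` positive integers.  Let `I_d ⊆ T_d` and
`I_{d+1} ⊆ T_{d+1}` be `A`-submodules with `T_1 · I_d ⊆ I_{d+1}`, such that `T_d/I_d` and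
`T_{d+1}/I_{d+1}` are free `A`-modules of rank `μ`.  Then `T_1 · I_d = I_{d+1}`. -/
theorem mulT1_eq_of_free {K : Type*} [Field K] [IsAlgClosed K] [CharZero K]
    {A : Type*} [CommRing A] [Algebra K A] [IsNoetherianRing A] [IsLocalRing A]
    {n μ d : ℕ} (hμ : 0 < μ) (hμd : μ ≤ d)
    (Id : Submodule A (MvPolynomial (Fin (n + 1)) A))
    (Id1 : Submodule A (MvPolynomial (Fin (n + 1)) A))
    (hId : Id ≤ homogComp n A d) (hId1 : Id1 ≤ homogComp n A (d + 1))
    (hmul : mulT1 Id ≤ Id1)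
    (hfree : Nonempty (Basis (Fin μ) A (quotComp Id d)))
    (hfree1 : Nonempty (Basis (Fin μ) A (quotComp Id1 (d + 1)))) :
    mulT1 Id = Id1 := by
  classical
  obtain ⟨b⟩ := hfree
  obtain ⟨b1⟩ := hfree1
  -- Step 1 : T₁ ⬝ I_d is homogeneous of degree d+1
  have hmulhomog : mulT1 Id ≤ homogComp n A (d + 1) := by
    rw [mulT1, Submodule.span_le]
    rintro p ⟨ℓ, hℓ, f, hf, rfl⟩
    have h := MvPolynomial.IsHomogeneous.mul (hℓ : MvPolynomial.IsHomogeneous ℓ 1)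
      (hId hf : MvPolynomial.IsHomogeneous f d)
    rwa [add_comm 1 d] at h
  -- k-side submodules
  have hVle : MacAux.resSub Id ≤ homogeneousSubmodule (Fin (n + 1)) (IsLocalRing.ResidueField A) d := MacAux.resSub_le_homog hId
  have hWle : MacAux.resSub (mulT1 Id) ≤ homogeneousSubmodule (Fin (n + 1)) (IsLocalRing.ResidueField A) (d + 1) :=
    MacAux.resSub_le_homog hmulhomog
  haveI hfdV : FiniteDimensional (IsLocalRing.ResidueField A) ↥(MacAux.resSub Id) :=
    Submodule.finiteDimensional_of_le hVle
  haveI hfdW : FiniteDimensional (IsLocalRing.ResidueField A) ↥(MacAux.resSub (mulT1 Id)) :=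
    Submodule.finiteDimensional_of_le hWle
  -- Step 2a : codimension of resSub Id is at most μ
  have hcodimV : Module.finrank (IsLocalRing.ResidueField A) ↥(homogeneousSubmodule (Fin (n + 1)) (IsLocalRing.ResidueField A) d)
      ≤ Module.finrank (IsLocalRing.ResidueField A) ↥(MacAux.resSub Id) + μ := by
    choose r hr using fun j : Fin μ =>
      Submodule.Quotient.mk_surjective (Id.comap (homogComp n A d).subtype) (b j)
    set gb : Fin μ → MvPolynomial (Fin (n + 1)) (IsLocalRing.ResidueField A) :=
      fun j => MvPolynomial.map (IsLocalRing.residue A) ((r j : ↥(homogComp n A d)) : _) with hgb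
    have hcover : homogeneousSubmodule (Fin (n + 1)) (IsLocalRing.ResidueField A) d
        ≤ MacAux.resSub Id ⊔ Submodule.span (IsLocalRing.ResidueField A) (Set.range gb) := by
      intro s hs
      set t := MacAux.liftPoly (A := A) s with ht'
      have ht : t ∈ homogComp n A d := MacAux.liftPoly_homog hs
      set Nc := Id.comap (homogComp n A d).subtype with hNc
      set x : quotComp Id d := Submodule.Quotient.mk ⟨t, ht⟩ with hx
      have hxrep : ∑ j, b.repr x j • b j = x := b.sum_repr x
      set c : Fin μ → A := fun j => b.repr x j with hcdef
      have h0 : Nc.mkQ ((⟨t, ht⟩ : ↥(homogComp n A d)) - ∑ j, c j • r j) = 0 := by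
        rw [map_sub, map_sum]
        have h1 : ∀ j : Fin μ, Nc.mkQ (c j • r j) = c j • b j := fun j => by
          rw [map_smul, Submodule.mkQ_apply, hr j]; rfl
        rw [Finset.sum_congr rfl (fun j _ => h1 j), Submodule.mkQ_apply]
        rw [show (Submodule.Quotient.mk (⟨t, ht⟩ : ↥(homogComp n A d)) : quotComp Id d) = x from rfl]
        exact sub_eq_zero.mpr hxrep.symm
      have hdiff : (⟨t, ht⟩ : ↥(homogComp n A d)) - ∑ j, c j • r j ∈ Nc := by
        rwa [Submodule.mkQ_apply, Submodule.Quotient.mk_eq_zero] at h0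
      have hdiff' : t - ∑ j, c j • ((r j : ↥(homogComp n A d)) : MvPolynomial (Fin (n + 1)) A) ∈ Id := by
        have := hdiff
        rw [hNc, Submodule.mem_comap] at this
        simpa using this
      have hsplit : s = MvPolynomial.map (IsLocalRing.residue A)
            (t - ∑ j, c j • ((r j : ↥(homogComp n A d)) : MvPolynomial (Fin (n + 1)) A))
          + ∑ j, (IsLocalRing.residue A (c j)) • gb j := by
        rw [map_sub, map_sum]
        have h2 : ∀ j : Fin μ, MvPolynomial.map (IsLocalRing.residue A)
            (c j • ((r j : ↥(homogComp n A d)) : MvPolynomial (Fin (n + 1)) A))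
            = (IsLocalRing.residue A (c j)) • gb j := fun j => MacAux.psi_smul _ _
        rw [Finset.sum_congr rfl (fun j _ => h2 j), sub_add_cancel, ht', MacAux.psi_liftPoly]
      rw [Submodule.mem_sup]
      refine ⟨_, ⟨_, hdiff', rfl⟩, _, ?_, hsplit.symm⟩
      exact Submodule.sum_mem _ (fun j _ =>
        Submodule.smul_mem _ _ (Submodule.subset_span ⟨j, rfl⟩))
    haveI hfdspan : FiniteDimensional (IsLocalRing.ResidueField A) ↥(Submodule.span (IsLocalRing.ResidueField A) (Set.range gb)) :=
      FiniteDimensional.span_of_finite (IsLocalRing.ResidueField A) (Set.finite_range gb)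
    haveI : FiniteDimensional (IsLocalRing.ResidueField A) ↥(MacAux.resSub Id ⊔ Submodule.span (IsLocalRing.ResidueField A) (Set.range gb)) :=
      Submodule.finiteDimensional_sup _ _
    have h3 := Submodule.finrank_mono hcover
    have h4 := Submodule.finrank_sup_add_finrank_inf_eq (MacAux.resSub Id)
      (Submodule.span (IsLocalRing.ResidueField A) (Set.range gb))
    have h5 : Module.finrank (IsLocalRing.ResidueField A) ↥(Submodule.span (IsLocalRing.ResidueField A) (Set.range gb)) ≤ μ := by
      refine le_trans (finrank_span_le_card _) ?_
      rw [Set.toFinset_range]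
      exact le_trans (Finset.card_image_le) (by simp)
    omega
  -- Step 2b : products with variables land in resSub (mulT1 Id)
  have hmulV : ∀ i : (Fin (n + 1)), ∀ f ∈ MacAux.resSub Id,
      (X i : MvPolynomial (Fin (n + 1)) (IsLocalRing.ResidueField A)) * f ∈ MacAux.resSub (mulT1 Id) := by
    rintro i f ⟨p, hp, rfl⟩
    refine ⟨X i * p, ?_, by rw [map_mul, MvPolynomial.map_X]⟩
    exact Submodule.subset_span ⟨X i, isHomogeneous_X _ i, p, hp, rfl⟩
  -- Step 2c : Macaulay bound over the residue field
  have hgrowth := MacAux.lemmaM d μ hμd (MacAux.resSub Id) (MacAux.resSub (mulT1 Id))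
    hVle hWle hcodimV hmulV
  -- Step 3 : choose a spanning complement of size μ in degree d+1 over the residue field
  obtain ⟨gbar, hgbar_mem, hgbar_cover⟩ :
      ∃ gbar : Fin μ → MvPolynomial (Fin (n + 1)) (IsLocalRing.ResidueField A),
        (∀ j, gbar j ∈ homogeneousSubmodule (Fin (n + 1)) (IsLocalRing.ResidueField A) (d+1)) ∧
        homogeneousSubmodule (Fin (n + 1)) (IsLocalRing.ResidueField A) (d+1)
          ≤ MacAux.resSub (mulT1 Id)
            ⊔ Submodule.span (IsLocalRing.ResidueField A) (Set.range gbar) := by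
    set E1 := homogeneousSubmodule (Fin (n + 1)) (IsLocalRing.ResidueField A) (d+1) with hE1
    set Nck := (MacAux.resSub (mulT1 Id)).comap E1.subtype with hNck
    have hfr := Submodule.finrank_quotient_add_finrank Nck
    have hcomap : Module.finrank (IsLocalRing.ResidueField A) ↥Nck
        = Module.finrank (IsLocalRing.ResidueField A) ↥(MacAux.resSub (mulT1 Id)) :=
      (Submodule.comapSubtypeEquivOfLe hWle).finrank_eq
    have hQμ : Module.finrank (IsLocalRing.ResidueField A) (↥E1 ⧸ Nck) ≤ μ := by omega
    set ν := Module.finrank (IsLocalRing.ResidueField A) (↥E1 ⧸ Nck) with hν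
    let bq := Module.finBasis (IsLocalRing.ResidueField A) (↥E1 ⧸ Nck)
    choose qrep hqrep using fun j : Fin ν => Submodule.Quotient.mk_surjective Nck (bq j)
    refine ⟨fun j => if h : (j : ℕ) < ν then ((qrep ⟨j, h⟩ : ↥E1) : _) else 0, ?_, ?_⟩
    · intro j
      dsimp only
      by_cases h : (j : ℕ) < ν
      · rw [dif_pos h]; exact (qrep ⟨j, h⟩).2
      · rw [dif_neg h]; exact Submodule.zero_mem _
    · intro s hs
      set x : ↥E1 ⧸ Nck := Submodule.Quotient.mk ⟨s, hs⟩ with hx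
      have hxrep : ∑ j, bq.repr x j • bq j = x := bq.sum_repr x
      set c : Fin ν → IsLocalRing.ResidueField A := fun j => bq.repr x j with hcdef
      have h0 : Nck.mkQ ((⟨s, hs⟩ : ↥E1) - ∑ j, c j • qrep j) = 0 := by
        rw [map_sub, map_sum]
        have h1 : ∀ j : Fin ν, Nck.mkQ (c j • qrep j) = c j • bq j := fun j => by
          rw [map_smul, Submodule.mkQ_apply, hqrep j]
        rw [Finset.sum_congr rfl (fun j _ => h1 j), Submodule.mkQ_apply, ← hx, hxrep, sub_self]
      have hdiff : (⟨s, hs⟩ : ↥E1) - ∑ j, c j • qrep j ∈ Nck := by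
        rwa [Submodule.mkQ_apply, Submodule.Quotient.mk_eq_zero] at h0
      have hdiff' : s - ∑ j, c j • ((qrep j : ↥E1) : MvPolynomial (Fin (n + 1)) (IsLocalRing.ResidueField A))
          ∈ MacAux.resSub (mulT1 Id) := by
        rw [hNck, Submodule.mem_comap] at hdiff
        simpa using hdiff
      rw [Submodule.mem_sup]
      refine ⟨_, hdiff', ∑ j, c j • ((qrep j : ↥E1) : MvPolynomial (Fin (n + 1)) (IsLocalRing.ResidueField A)), ?_, by ring⟩
      refine Submodule.sum_mem _ (fun j _ => Submodule.smul_mem _ _ (Submodule.subset_span ?_))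
      refine ⟨⟨(j : ℕ), lt_of_lt_of_le j.2 hQμ⟩, ?_⟩
      have hlt : ((⟨(j : ℕ), lt_of_lt_of_le j.2 hQμ⟩ : Fin μ) : ℕ) < ν := j.2
      dsimp only
      rw [dif_pos hlt]
  -- Step 4 : lift the complement to A
  have hg_homog : ∀ j, MacAux.liftPoly (A := A) (gbar j) ∈ homogComp n A (d+1) :=
    fun j => MacAux.liftPoly_homog (hgbar_mem j)
  have hg_psi : ∀ j, MvPolynomial.map (IsLocalRing.residue A) (MacAux.liftPoly (A := A) (gbar j)) = gbar j :=
    fun j => MacAux.psi_liftPoly _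
  -- Step 5 : Nakayama
  have hcoverA : homogComp n A (d+1)
      ≤ (mulT1 Id ⊔ Submodule.span A (Set.range (fun j => MacAux.liftPoly (A := A) (gbar j))))
        ⊔ (IsLocalRing.maximalIdeal A) • (homogComp n A (d+1)) := by
    intro x hx
    have hsx : MvPolynomial.map (IsLocalRing.residue A) x
        ∈ homogeneousSubmodule (Fin (n + 1)) (IsLocalRing.ResidueField A) (d+1) :=
      MacAux.psi_homog hx
    have hsup := hgbar_cover hsx
    rw [Submodule.mem_sup] at hsup
    obtain ⟨y, hy, z, hz, hyz⟩ := hsup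
    obtain ⟨w', hw', hwy⟩ := hy
    rw [mem_span_range_iff_exists_fun] at hz
    obtain ⟨c, hc⟩ := hz
    choose a ha using fun j => MacAux.res_surjective (A := A) (c j)
    have hy'1 : x - w' - ∑ j, a j • MacAux.liftPoly (A := A) (gbar j) ∈ homogComp n A (d+1) :=
      Submodule.sub_mem _ (Submodule.sub_mem _ hx (hmulhomog hw'))
        (Submodule.sum_mem _ (fun j _ => Submodule.smul_mem _ _ (hg_homog j)))
    have hy'0 : MvPolynomial.map (IsLocalRing.residue A)
        (x - w' - ∑ j, a j • MacAux.liftPoly (A := A) (gbar j)) = 0 := by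
      rw [map_sub, map_sub, map_sum]
      have h2 : ∀ j, MvPolynomial.map (IsLocalRing.residue A) (a j • MacAux.liftPoly (A := A) (gbar j))
          = c j • gbar j := fun j => by rw [MacAux.psi_smul, ha j, hg_psi j]
      rw [Finset.sum_congr rfl (fun j _ => h2 j), hwy, hc, ← hyz]
      ring
    have hy'mem : x - w' - ∑ j, a j • MacAux.liftPoly (A := A) (gbar j)
        ∈ (IsLocalRing.maximalIdeal A) • (homogComp n A (d+1)) := by
      have hcf : ∀ m, coeff m (x - w' - ∑ j, a j • MacAux.liftPoly (A := A) (gbar j))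
          ∈ IsLocalRing.maximalIdeal A := by
        intro m
        have h3 : IsLocalRing.residue A (coeff m (x - w' - ∑ j, a j • MacAux.liftPoly (A := A) (gbar j))) = 0 := by
          rw [← MvPolynomial.coeff_map, hy'0, MvPolynomial.coeff_zero]
        exact Ideal.Quotient.eq_zero_iff_mem.mp h3
      set y' := x - w' - ∑ j, a j • MacAux.liftPoly (A := A) (gbar j) with hy'def
      have hrw : y' = ∑ m ∈ y'.support, (coeff m y') • (monomial m (1 : A)) := by
        conv_lhs => rw [MvPolynomial.as_sum y']
        exact Finset.sum_congr rfl (fun m _ => by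
          rw [MvPolynomial.smul_monomial, smul_eq_mul, mul_one])
      rw [hrw]
      refine Submodule.sum_mem _ (fun m hm => ?_)
      refine Submodule.smul_mem_smul (hcf m) ?_
      rw [MvPolynomial.mem_support_iff] at hm
      exact isHomogeneous_monomial _ (MacAux.mem_homog_iff'.mp hy'1 m hm)
    have hxsum : x = (w' + ∑ j, a j • MacAux.liftPoly (A := A) (gbar j))
        + (x - w' - ∑ j, a j • MacAux.liftPoly (A := A) (gbar j)) := by ring
    rw [hxsum]
    refine Submodule.add_mem _ (Submodule.mem_sup_left ?_) (Submodule.mem_sup_right hy'mem)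
    rw [Submodule.mem_sup]
    exact ⟨w', hw', _, Submodule.sum_mem _ (fun j _ =>
      Submodule.smul_mem _ _ (Submodule.subset_span ⟨j, rfl⟩)), rfl⟩
  have hPfg : (homogComp n A (d+1)).FG := by
    have hle : homogComp n A (d+1) ≤ restrictTotalDegree (Fin (n + 1)) A (d+1) := by
      intro p hp
      rw [mem_restrictTotalDegree]
      exact MvPolynomial.IsHomogeneous.totalDegree_le hp
    have h1 : ((homogComp n A (d+1)).comap (restrictTotalDegree (Fin (n + 1)) A (d+1)).subtype).FG :=
      IsNoetherian.noetherian _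
    have h2 := h1.map (restrictTotalDegree (Fin (n + 1)) A (d+1)).subtype
    rwa [Submodule.map_comap_subtype, inf_eq_right.mpr hle] at h2
  have hNak : homogComp n A (d+1)
      ≤ mulT1 Id ⊔ Submodule.span A (Set.range (fun j => MacAux.liftPoly (A := A) (gbar j))) :=
    MacAux.nakayama_cover hPfg hcoverA
  -- Step 6 : conclude
  refine le_antisymm hmul ?_
  have h12 : (mulT1 Id).comap (homogComp n A (d+1)).subtype
      ≤ Id1.comap (homogComp n A (d+1)).subtype := fun x hx => hmul hx
  have hspan : ∀ x : ↥(homogComp n A (d+1)),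
      x ∈ (mulT1 Id).comap (homogComp n A (d+1)).subtype
        ⊔ Submodule.span A (Set.range (fun j =>
            (⟨MacAux.liftPoly (A := A) (gbar j), hg_homog j⟩ : ↥(homogComp n A (d+1))))) := by
    intro x
    have hsup := hNak x.2
    rw [Submodule.mem_sup] at hsup
    obtain ⟨a', ha', z, hz, hxz⟩ := hsup
    rw [mem_span_range_iff_exists_fun] at hz
    obtain ⟨c, hc⟩ := hz
    have ha'P : a' ∈ homogComp n A (d+1) := hmulhomog ha'
    have hx2 : x = (⟨a', ha'P⟩ : ↥(homogComp n A (d+1)))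
        + ∑ j, c j • (⟨MacAux.liftPoly (A := A) (gbar j), hg_homog j⟩ : ↥(homogComp n A (d+1))) := by
      apply Subtype.ext
      push_cast
      rw [← hxz, ← hc]
    rw [hx2]
    refine Submodule.add_mem _ (Submodule.mem_sup_left ha') (Submodule.mem_sup_right ?_)
    exact Submodule.sum_mem _ (fun j _ =>
      Submodule.smul_mem _ _ (Submodule.subset_span ⟨j, rfl⟩))
  have hle21 := MacAux.le_of_quotient_basis h12
    (b1 : Basis (Fin μ) A (↥(homogComp n A (d+1)) ⧸ Id1.comap (homogComp n A (d+1)).subtype))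
    _ hspan
  intro x hx
  exact hle21 (show (⟨x, hId1 hx⟩ : ↥(homogComp n A (d+1)))
    ∈ Id1.comap (homogComp n A (d+1)).subtype from hx)

end
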